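/- For every signed graph G (a loop-less symmetric digraph with arbitrary arc-signing), there exists a simple signed graph G' on the same underlying graph (i.e., a symmetric signing σ' with σ'(uv) = σ'(vu) for all edges) such that the number of fixed points of the conjunctive network on G is at most the number of fixed points of the conjunctive network on G'. -/

import Mathlib

/-- `S` is a fixed set of the conjunctive network with positive arcs `pos`, negative `neg`. -/
def IsFixedSet {V : Type*} (pos neg : V → V → Prop) (S : Set V) : Prop :=
  ∀ v, v ∈ S ↔ (∀ u, pos u v → u ∈ S) ∧ (∀ u, neg u v → u ∉ S)

/-- Number of fixed points of the conjunctive network. -/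
noncomputable def fixc {V : Type*} (pos neg : V → V → Prop) : ℕ :=
  Set.ncard {S : Set V | IsFixedSet pos neg S}

def posOf {V : Type*} (G : SimpleGraph V) (σ : V → V → Bool) : V → V → Prop :=
  fun u v => G.Adj u v ∧ σ u v = true

def negOf {V : Type*} (G : SimpleGraph V) (σ : V → V → Bool) : V → V → Prop :=
  fun u v => G.Adj u v ∧ σ u v = false

/-- Key extension lemma: every fixed set of the signed network extends, inside `M`
(the heads of positive arcs of asymmetric edges), to a fixed set of the AND-symmetrized
network. -/
theorem exists_ext {V : Type*} [Fintype V] (G : SimpleGraph V) (σ : V → V → Bool)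
    (S : Set V) (hS : IsFixedSet (posOf G σ) (negOf G σ) S) :
    ∃ S' : Set V, IsFixedSet (posOf G (fun u v => σ u v && σ v u))
        (negOf G (fun u v => σ u v && σ v u)) S' ∧
      S' \ {v | ∃ u, G.Adj u v ∧ σ u v = true ∧ σ v u = false} = S := by
  classical
  set σ' : V → V → Bool := fun u v => σ u v && σ v u with hσ'
  set M : Set V := {v | ∃ u, G.Adj u v ∧ σ u v = true ∧ σ v u = false} with hMdef
  -- symmetry of σ'
  have hsymm : ∀ u v, σ' u v = σ' v u := fun u v => Bool.and_comm _ _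
  have posSymm : ∀ u v, posOf G σ' u v → posOf G σ' v u := by
    intro u v ⟨h, e⟩; exact ⟨h.symm, (hsymm v u).trans e⟩
  have negSymm : ∀ u v, negOf G σ' u v → negOf G σ' v u := by
    intro u v ⟨h, e⟩; exact ⟨h.symm, (hsymm v u).trans e⟩
  -- S avoids M
  have hSM : ∀ v ∈ S, v ∉ M := by
    intro v hv ⟨u, hadj, htu, hfu⟩
    have hu : u ∈ S := ((hS v).1 hv).1 u ⟨hadj, htu⟩
    exact ((hS u).1 hu).2 v ⟨hadj.symm, hfu⟩ hv
  -- the family of admissible extensions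
  set 𝒯 : Set (Set V) := {T | T ⊆ M ∧ ∀ t ∈ T,
      (∀ u, posOf G σ' u t → u ∈ S ∪ T) ∧ (∀ u, negOf G σ' u t → u ∉ S ∪ T)} with h𝒯
  have hempty : (∅ : Set V) ∈ 𝒯 := ⟨Set.empty_subset _, fun t ht => ht.elim⟩
  obtain ⟨T, hT, hTmax⟩ := Set.Finite.exists_maximalFor id 𝒯 (Set.toFinite _) ⟨∅, hempty⟩
  obtain ⟨hTM, hTcond⟩ := hT
  refine ⟨S ∪ T, ?_, ?_⟩
  · intro v
    constructor
    · rintro (hv | hv)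
      · -- v ∈ S
        have hvM : v ∉ M := hSM v hv
        obtain ⟨hpos, hneg⟩ := (hS v).1 hv
        constructor
        · intro u ⟨hadj, he⟩
          have he' : σ u v = true ∧ σ v u = true := by
            rw [← Bool.and_eq_true]; exact he
          exact Or.inl (hpos u ⟨hadj, he'.1⟩)
        · intro u ⟨hadj, he⟩
          rintro (huS | huT)
          · -- u ∈ S : derive contradiction
            rcases Bool.and_eq_false_iff.1 he with h1 | h1
            · exact hneg u ⟨hadj, h1⟩ huS
            · -- σ u v = true, σ v u = false would put v in M; analyze
              cases htuv : σ u v with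
              | false => exact hneg u ⟨hadj, htuv⟩ huS
              | true => exact hvM ⟨u, hadj, htuv, by
                  cases h : σ v u with
                  | false => rfl
                  | true => simp [hσ', htuv, h] at he⟩
          · exact (hTcond u huT).2 v (negSymm u v ⟨hadj, he⟩) (Or.inl hv)
      · -- v ∈ T
        obtain ⟨h1, h2⟩ := hTcond v hv
        exact ⟨h1, h2⟩
    · intro ⟨hp, hn⟩
      by_contra hv
      have hvS : v ∉ S := fun h => hv (Or.inl h)
      have hvT : v ∉ T := fun h => hv (Or.inr h)
      by_cases hvM : v ∈ M
      · -- extend T by v, contradicting maximality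
        have hmem : T ∪ {v} ∈ 𝒯 := by
          constructor
          · intro x hx
            rcases hx with hx | hx
            · exact hTM hx
            · rcases hx with rfl; exact hvM
          · intro t ht
            rcases ht with ht | ht
            · refine ⟨fun u hu => ?_, fun u hu => ?_⟩
              · rcases (hTcond t ht).1 u hu with h | h
                · exact Or.inl h
                · exact Or.inr (Or.inl h)
              · rintro (h | h | h)
                · exact (hTcond t ht).2 u hu (Or.inl h)
                · exact (hTcond t ht).2 u hu (Or.inr h)
                · rcases h with rfl
                  exact hn t (negSymm _ _ hu) (Or.inr ht)
            · rcases ht with rfl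
              refine ⟨fun u hu => ?_, fun u hu => ?_⟩
              · rcases hp u hu with h | h
                · exact Or.inl h
                · exact Or.inr (Or.inl h)
              · rintro (h | h | h)
                · exact hn u hu (Or.inl h)
                · exact hn u hu (Or.inr h)
                · rcases h with rfl
                  exact G.loopless.irrefl u hu.1
        have := hTmax hmem (Set.subset_union_left)
        simp only [id] at this
        exact hvT (this (Or.inr rfl : v ∈ T ∪ {v}))
      · -- v ∉ M : use failure of the σ-condition at v
        have hfail : ¬((∀ u, posOf G σ u v → u ∈ S) ∧ (∀ u, negOf G σ u v → u ∉ S)) :=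
          fun h => hvS ((hS v).2 h)
        rcases not_and_or.1 hfail with h | h
        · push_neg at h
          obtain ⟨u, ⟨hadj, htuv⟩, huS⟩ := h
          have hvu : σ v u = true := by
            cases h : σ v u with
            | true => rfl
            | false => exact absurd ⟨u, hadj, htuv, h⟩ hvM
          have hpos' : posOf G σ' u v := ⟨hadj, by simp [hσ', htuv, hvu]⟩
          rcases hp u hpos' with h' | h'
          · exact huS h'
          · exact hv ((hTcond u h').1 v (posSymm u v hpos') )
        · push_neg at h
          obtain ⟨u, ⟨hadj, hfuv⟩, huS⟩ := h
          exact hn u ⟨hadj, by simp [hσ', hfuv]⟩ (Or.inl huS)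
  · -- (S ∪ T) \ M = S
    ext x
    simp only [Set.mem_diff, Set.mem_union]
    constructor
    · rintro ⟨h | h, hM⟩
      · exact h
      · exact absurd (hTM h) hM
    · intro h
      exact ⟨Or.inl h, hSM x h⟩

/-- For every signed graph (graph `G` with arbitrary arc-signing `σ`) there is a
symmetric signing `σ'` with at least as many fixed points of the conjunctive network. -/
theorem stmt4 {V : Type*} [Fintype V] (G : SimpleGraph V) (σ : V → V → Bool) :
    ∃ σ' : V → V → Bool, (∀ u v, σ' u v = σ' v u) ∧
      fixc (posOf G σ) (negOf G σ) ≤ fixc (posOf G σ') (negOf G σ') := by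
  classical
  refine ⟨fun u v => σ u v && σ v u, fun u v => Bool.and_comm _ _, ?_⟩
  set M : Set V := {v | ∃ u, G.Adj u v ∧ σ u v = true ∧ σ v u = false}
  have hchoice : ∀ S : Set V, IsFixedSet (posOf G σ) (negOf G σ) S →
      ∃ S' : Set V, IsFixedSet (posOf G (fun u v => σ u v && σ v u))
        (negOf G (fun u v => σ u v && σ v u)) S' ∧ S' \ M = S :=
    fun S hS => exists_ext G σ S hS
  set f : Set V → Set V := fun S =>
    if h : IsFixedSet (posOf G σ) (negOf G σ) S then (hchoice S h).choose else S with hf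
  apply Set.ncard_le_ncard_of_injOn f
  · intro S hS
    simp only [Set.mem_setOf_eq] at hS ⊢
    simp only [hf, dif_pos hS]
    exact (hchoice S hS).choose_spec.1
  · intro S1 h1 S2 h2 heq
    simp only [Set.mem_setOf_eq] at h1 h2
    simp only [hf, dif_pos h1, dif_pos h2] at heq
    have e1 := (hchoice S1 h1).choose_spec.2
    have e2 := (hchoice S2 h2).choose_spec.2
    rw [← e1, ← e2, heq]
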